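/- Let q be a primitive l-th root of unity with l odd. In the localization of A(SL_q(2)) at the central element α = a^l, the element a is invertible with inverse a^{-1} = α^{-1} a^{l-1}, and the localized module over A(SL(2))[α^{-1}] is free with basis the l^3 monomials a^{r_a} b^{r_b} c^{r_c}, 0 ≤ r_a, r_b, r_c ≤ l-1. -/

import Mathlib

noncomputable section
open scoped TensorProduct

/-- The free `ℂ`-algebra on four generators `a, b, c, d`. -/
abbrev FreeSL : Type := FreeAlgebra ℂ (Fin 4)

def Fa : FreeSL := FreeAlgebra.ι ℂ 0
def Fb : FreeSL := FreeAlgebra.ι ℂ 1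
def Fc : FreeSL := FreeAlgebra.ι ℂ 2
def Fd : FreeSL := FreeAlgebra.ι ℂ 3

/-- The defining relations of `A(SL_q(2))`. -/
inductive SLqRel (q : ℂ) : FreeSL → FreeSL → Prop
  | ab : SLqRel q (Fa * Fb) (q • (Fb * Fa))
  | ac : SLqRel q (Fa * Fc) (q • (Fc * Fa))
  | bd : SLqRel q (Fb * Fd) (q • (Fd * Fb))
  | bc : SLqRel q (Fb * Fc) (Fc * Fb)
  | cd : SLqRel q (Fc * Fd) (q • (Fd * Fc))
  | ad : SLqRel q (Fa * Fd - Fd * Fa) ((q - q⁻¹) • (Fb * Fc))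
  | det : SLqRel q (Fa * Fd - q • (Fb * Fc)) 1

/-- The quantum coordinate algebra `A(SL_q(2))`. -/
abbrev ASLq (q : ℂ) : Type := RingQuot (SLqRel q)

def aq (q : ℂ) : ASLq q := RingQuot.mkAlgHom ℂ (SLqRel q) Fa
def bq (q : ℂ) : ASLq q := RingQuot.mkAlgHom ℂ (SLqRel q) Fb
def cq (q : ℂ) : ASLq q := RingQuot.mkAlgHom ℂ (SLqRel q) Fc
def dq (q : ℂ) : ASLq q := RingQuot.mkAlgHom ℂ (SLqRel q) Fd

/-- The coefficients `p_{k,j}(q)`. -/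
def pcoef (q : ℂ) (k j : ℕ) : ℂ :=
  q ^ (j ^ 2) * (∏ r ∈ Finset.Icc (j + 1) k, (q ^ (2 * r) - 1)) /
    (∏ s ∈ Finset.Icc 1 (k - j), (q ^ (2 * s) - 1))


set_option linter.unusedSectionVars false

namespace SLqAux

section scalars

variable {Alg : Type*} [Ring Alg] [Algebra ℂ Alg]

lemma sc_pow_left (t : ℂ) (x y : Alg) (h : x * y = t • (y * x)) :
    ∀ n : ℕ, x ^ n * y = t ^ n • (y * x ^ n) := by
  intro n
  induction n with
  | zero => simp
  | succ n ih =>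
    rw [pow_succ', mul_assoc, ih, mul_smul_comm, ← mul_assoc, h, smul_mul_assoc,
      smul_smul, mul_assoc, ← pow_succ', ← pow_succ]

lemma sc_pow_right (t : ℂ) (x y : Alg) (h : x * y = t • (y * x)) :
    ∀ m : ℕ, x * y ^ m = t ^ m • (y ^ m * x) := by
  intro m
  induction m with
  | zero => simp
  | succ m ih =>
    rw [pow_succ, ← mul_assoc, ih, smul_mul_assoc, mul_assoc, h, mul_smul_comm,
      smul_smul, ← mul_assoc, ← pow_succ, ← pow_succ]

lemma sc_pow_pow (t : ℂ) (x y : Alg) (h : x * y = t • (y * x)) (n m : ℕ) :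
    x ^ n * y ^ m = t ^ (n * m) • (y ^ m * x ^ n) := by
  rw [sc_pow_right (t ^ n) (x ^ n) y (sc_pow_left t x y h n) m, ← pow_mul]

end scalars

variable {q : ℂ}

lemma rel_ab : aq q * bq q = q • (bq q * aq q) := by
  simpa only [aq, bq, cq, dq, map_mul, map_smul] using RingQuot.mkAlgHom_rel ℂ (SLqRel.ab (q := q))

lemma rel_ac : aq q * cq q = q • (cq q * aq q) := by
  simpa only [aq, bq, cq, dq, map_mul, map_smul] using RingQuot.mkAlgHom_rel ℂ (SLqRel.ac (q := q))

lemma rel_bd : bq q * dq q = q • (dq q * bq q) := by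
  simpa only [aq, bq, cq, dq, map_mul, map_smul] using RingQuot.mkAlgHom_rel ℂ (SLqRel.bd (q := q))

lemma rel_bc : bq q * cq q = cq q * bq q := by
  simpa only [bq, cq, map_mul] using RingQuot.mkAlgHom_rel ℂ (SLqRel.bc (q := q))

lemma rel_cd : cq q * dq q = q • (dq q * cq q) := by
  simpa only [aq, bq, cq, dq, map_mul, map_smul] using RingQuot.mkAlgHom_rel ℂ (SLqRel.cd (q := q))

lemma rel_ad : aq q * dq q - dq q * aq q = (q - q⁻¹) • (bq q * cq q) := by
  simpa only [aq, bq, cq, dq, map_mul, map_smul, map_sub] using RingQuot.mkAlgHom_rel ℂ (SLqRel.ad (q := q))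

lemma rel_det : aq q * dq q - q • (bq q * cq q) = 1 := by
  simpa only [aq, bq, cq, dq, map_mul, map_smul, map_sub, map_one] using
    RingQuot.mkAlgHom_rel ℂ (SLqRel.det (q := q))

lemma ad_eq : aq q * dq q = 1 + q • (bq q * cq q) := by
  have := rel_det (q := q); linear_combination (norm := module) this

lemma ad_eq' : aq q * dq q = dq q * aq q + (q - q⁻¹) • (bq q * cq q) := by
  have := rel_ad (q := q); linear_combination (norm := module) this

lemma a_bc : aq q * (bq q * cq q) = (q ^ 2) • (bq q * cq q * aq q) := by
  calc aq q * (bq q * cq q) = (aq q * bq q) * cq q := by rw [mul_assoc]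
    _ = q • (bq q * (aq q * cq q)) := by rw [rel_ab, smul_mul_assoc, mul_assoc]
    _ = q • (bq q * (q • (cq q * aq q))) := by rw [rel_ac]
    _ = (q ^ 2) • (bq q * cq q * aq q) := by
        rw [mul_smul_comm, smul_smul, ← mul_assoc, sq]

end SLqAux
namespace SLqAux

variable {q : ℂ}

lemma apow_d (hq0 : q ≠ 0) (n : ℕ) :
    aq q ^ (n + 1) * dq q =
      dq q * aq q ^ (n + 1) + (q⁻¹ * (q ^ (2 * (n + 1)) - 1)) • (bq q * cq q * aq q ^ n) := by
  induction n with
  | zero =>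
    have h1 : q⁻¹ * (q ^ (2 * (0 + 1)) - 1) = q - q⁻¹ := by field_simp
    rw [pow_one, pow_zero, mul_one, ad_eq', h1]
  | succ n ih =>
    have step : aq q ^ (n + 1 + 1) * dq q = aq q * (aq q ^ (n + 1) * dq q) := by
      rw [← mul_assoc, ← pow_succ']
    have habc : aq q * (bq q * cq q * aq q ^ n) = (q ^ 2) • (bq q * cq q * aq q ^ (n + 1)) := by
      rw [← mul_assoc, a_bc, smul_mul_assoc, mul_assoc, ← pow_succ']
    have had : aq q * (dq q * aq q ^ (n + 1)) =
        dq q * aq q ^ (n + 1 + 1) + (q - q⁻¹) • (bq q * cq q * aq q ^ (n + 1)) := by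
      rw [← mul_assoc, ad_eq', add_mul, smul_mul_assoc, mul_assoc, ← pow_succ']
    rw [step, ih, mul_add, had, mul_smul_comm, habc, smul_smul, add_assoc, ← add_smul]
    congr 2
    field_simp
    ring

lemma q_ne_zero {l : ℕ} (hq : IsPrimitiveRoot q l) (hl : Odd l) : q ≠ 0 := by
  intro h
  have hl0 : l ≠ 0 := by rintro rfl; exact (by decide : ¬ Odd 0) hl
  have := hq.pow_eq_one
  rw [h, zero_pow hl0] at this
  exact zero_ne_one this

lemma al_d {l : ℕ} (hq : IsPrimitiveRoot q l) (hl : Odd l) :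
    aq q ^ l * dq q = dq q * aq q ^ l := by
  have hl1 : 1 ≤ l := hl.pos
  obtain ⟨n, hn⟩ : ∃ n, l = n + 1 := ⟨l - 1, by omega⟩
  have h2l : q ^ (2 * l) = 1 := by
    rw [two_mul, pow_add, hq.pow_eq_one, one_mul]
  rw [hn] at h2l ⊢
  rw [apow_d (q_ne_zero hq hl) n, h2l, sub_self, mul_zero, zero_smul, add_zero]

lemma al_b {l : ℕ} (hq : IsPrimitiveRoot q l) :
    aq q ^ l * bq q = bq q * aq q ^ l := by
  rw [sc_pow_left q (aq q) (bq q) rel_ab l, hq.pow_eq_one, one_smul]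

lemma al_c {l : ℕ} (hq : IsPrimitiveRoot q l) :
    aq q ^ l * cq q = cq q * aq q ^ l := by
  rw [sc_pow_left q (aq q) (cq q) rel_ac l, hq.pow_eq_one, one_smul]

lemma bl_a {l : ℕ} (hq : IsPrimitiveRoot q l) :
    bq q ^ l * aq q = aq q * bq q ^ l := by
  rw [sc_pow_right q (aq q) (bq q) rel_ab l, hq.pow_eq_one, one_smul]

lemma bl_d {l : ℕ} (hq : IsPrimitiveRoot q l) :
    bq q ^ l * dq q = dq q * bq q ^ l := by
  rw [sc_pow_left q (bq q) (dq q) rel_bd l, hq.pow_eq_one, one_smul]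

lemma cl_a {l : ℕ} (hq : IsPrimitiveRoot q l) :
    cq q ^ l * aq q = aq q * cq q ^ l := by
  rw [sc_pow_right q (aq q) (cq q) rel_ac l, hq.pow_eq_one, one_smul]

lemma cl_d {l : ℕ} (hq : IsPrimitiveRoot q l) :
    cq q ^ l * dq q = dq q * cq q ^ l := by
  rw [sc_pow_left q (cq q) (dq q) rel_cd l, hq.pow_eq_one, one_smul]

lemma bl_c {l' : ℕ} : bq q ^ l' * cq q = cq q * bq q ^ l' := by
  rw [sc_pow_left (1 : ℂ) (bq q) (cq q) (by rw [rel_bc, one_smul]) l', one_pow, one_smul]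

lemma cl_b {l' : ℕ} : cq q ^ l' * bq q = bq q * cq q ^ l' := by
  rw [sc_pow_left (1 : ℂ) (cq q) (bq q) (by rw [← rel_bc, one_smul]) l', one_pow, one_smul]

/-- `ASLq q` is generated by the four generators. -/
lemma adjoin_gens :
    Algebra.adjoin ℂ ({aq q, bq q, cq q, dq q} : Set (ASLq q)) = ⊤ := by
  have h1 : Algebra.adjoin ℂ (Set.range (FreeAlgebra.ι ℂ : Fin 4 → FreeSL)) = ⊤ :=
    FreeAlgebra.adjoin_range_ι ℂ (Fin 4)
  have h2 : (RingQuot.mkAlgHom ℂ (SLqRel q)) ''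
      (Set.range (FreeAlgebra.ι ℂ : Fin 4 → FreeSL)) =
      ({aq q, bq q, cq q, dq q} : Set (ASLq q)) := by
    ext x
    constructor
    · rintro ⟨y, ⟨i, rfl⟩, rfl⟩
      fin_cases i
      · exact Or.inl rfl
      · exact Or.inr (Or.inl rfl)
      · exact Or.inr (Or.inr (Or.inl rfl))
      · exact Or.inr (Or.inr (Or.inr rfl))
    · rintro (rfl | rfl | rfl | rfl)
      · exact ⟨Fa, ⟨0, rfl⟩, rfl⟩
      · exact ⟨Fb, ⟨1, rfl⟩, rfl⟩
      · exact ⟨Fc, ⟨2, rfl⟩, rfl⟩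
      · exact ⟨Fd, ⟨3, rfl⟩, rfl⟩
  have h3 := AlgHom.map_adjoin (RingQuot.mkAlgHom ℂ (SLqRel q))
      (Set.range (FreeAlgebra.ι ℂ : Fin 4 → FreeSL))
  rw [h1, h2] at h3
  rw [← h3]
  rw [Algebra.map_top]
  exact (AlgHom.range_eq_top _).mpr (RingQuot.mkAlgHom_surjective ℂ _)

/-- An element commuting with the four generators is central. -/
lemma central_of_comm_gens (z : ASLq q)
    (ha : z * aq q = aq q * z) (hb : z * bq q = bq q * z)
    (hc : z * cq q = cq q * z) (hd : z * dq q = dq q * z) :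
    ∀ x : ASLq q, z * x = x * z := by
  have htop : Subalgebra.centralizer ℂ ({z} : Set (ASLq q)) = ⊤ := by
    rw [eq_top_iff, ← adjoin_gens]
    apply Algebra.adjoin_le
    rintro y (rfl | rfl | rfl | rfl) <;>
      · rw [SetLike.mem_coe, Subalgebra.mem_centralizer_iff ℂ]
        rintro g rfl
        first | exact ha | exact hb | exact hc | exact hd
  intro x
  have hx : x ∈ Subalgebra.centralizer ℂ ({z} : Set (ASLq q)) := by rw [htop]; trivial
  exact (Subalgebra.mem_centralizer_iff ℂ).mp hx z rfl

lemma al_central {l : ℕ} (hq : IsPrimitiveRoot q l) (hl : Odd l) :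
    ∀ x : ASLq q, aq q ^ l * x = x * aq q ^ l := by
  apply central_of_comm_gens
  · rw [← pow_succ', ← pow_succ]
  · exact al_b hq
  · exact al_c hq
  · exact al_d hq hl

lemma bl_central {l : ℕ} (hq : IsPrimitiveRoot q l) :
    ∀ x : ASLq q, bq q ^ l * x = x * bq q ^ l := by
  apply central_of_comm_gens
  · exact bl_a hq
  · rw [← pow_succ', ← pow_succ]
  · exact bl_c
  · exact bl_d hq

lemma cl_central {l : ℕ} (hq : IsPrimitiveRoot q l) :
    ∀ x : ASLq q, cq q ^ l * x = x * cq q ^ l := by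
  apply central_of_comm_gens
  · exact cl_a hq
  · exact cl_b
  · rw [← pow_succ', ← pow_succ]
  · exact cl_d hq

end SLqAux
namespace SLqAux

open Polynomial

variable {q : ℂ}

/-- Moving `a` past a polynomial in `t = bc` rescales the variable by `q²`. -/
lemma a_aeval (p : ℂ[X]) :
    aq q * (aeval (bq q * cq q) p) =
      (aeval (bq q * cq q) (p.comp (C (q ^ 2) * X))) * aq q := by
  induction p using Polynomial.induction_on' with
  | add p r hp hr => rw [map_add, mul_add, add_comp, map_add, add_mul, hp, hr]
  | monomial n c =>
    rw [aeval_monomial, ← Algebra.smul_def, mul_smul_comm,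
      sc_pow_right (q ^ 2) (aq q) (bq q * cq q) a_bc n]
    rw [show ((monomial n c).comp (C (q ^ 2) * X)) = monomial n (c * q ^ (2 * n)) by
      rw [monomial_comp, mul_pow, ← C_pow, ← pow_mul, ← mul_assoc, ← C_mul,
        C_mul_X_pow_eq_monomial]]
    rw [aeval_monomial, ← Algebra.smul_def, smul_mul_assoc,
      smul_smul, pow_mul, mul_comm]

lemma pow_ad (n : ℕ) :
    aq q ^ n * dq q ^ n =
      aeval (bq q * cq q) (∏ r ∈ Finset.range n, (1 + C (q ^ (2 * r + 1)) * X)) := by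
  induction n with
  | zero => simp
  | succ n ih =>
    have step : aq q ^ (n + 1) * dq q ^ (n + 1) =
        aq q * (aq q ^ n * dq q ^ n) * dq q := by
      rw [pow_succ' (aq q), pow_succ (dq q), mul_assoc, mul_assoc, mul_assoc]
    have had : (1 : ASLq q) + q • (bq q * cq q) = aeval (bq q * cq q) (1 + C q * X) := by
      simp [Algebra.smul_def]
    rw [step, ih, a_aeval, mul_assoc, ad_eq, had, ← map_mul]
    congr 1
    rw [prod_comp]
    have hfac : ∀ r : ℕ, ((1 + C (q ^ (2 * r + 1)) * X).comp (C (q ^ 2) * X)) =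
        1 + C (q ^ (2 * (r + 1) + 1)) * X := by
      intro r
      simp only [add_comp, one_comp, mul_comp, C_comp, X_comp, ← mul_assoc, ← C_mul, ← pow_add]
      ring_nf
    simp only [hfac]
    rw [Finset.prod_range_succ' (fun r => 1 + C (q ^ (2 * r + 1)) * X) n]
    simp

/-- The key cyclotomic-type identity. -/
lemma keypoly {l : ℕ} (hq : IsPrimitiveRoot q l) (hl : Odd l) :
    (∏ r ∈ Finset.range l, (1 + C (q ^ (2 * r + 1)) * X) : ℂ[X]) = 1 + X ^ l := by
  have hq0 : q ≠ 0 := q_ne_zero hq hl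
  have hl0 : 0 < l := hl.pos
  have hζ : IsPrimitiveRoot (q ^ 2) l := hq.pow_of_coprime 2 hl.coprime_two_left
  -- evaluated root-of-unity identity
  have hprod : ∀ w : ℂ, ∏ r ∈ Finset.range l, (w - (q ^ 2) ^ r) = w ^ l - 1 := by
    intro w
    have h1 := X_pow_sub_one_eq_prod hl0 hζ
    have h2 := congrArg (Polynomial.eval w) h1
    simp only [eval_sub, eval_pow, eval_X, eval_one, eval_prod, eval_sub, eval_C] at h2
    rw [h2]
    refine Finset.prod_bij (fun r _ => (q ^ 2) ^ r) ?_ ?_ ?_ ?_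
    · intro r _
      rw [Polynomial.mem_nthRootsFinset hl0, ← pow_mul, mul_comm, pow_mul, hζ.pow_eq_one,
        one_pow]
    · intro r hr r' hr' h
      exact hζ.injOn_pow (by simpa using hr) (by simpa using hr') h
    · intro ζ' hζ'
      have : NeZero l := ⟨hl0.ne'⟩
      obtain ⟨i, hi, rfl⟩ := hζ.eq_pow_of_pow_eq_one
        ((Polynomial.mem_nthRootsFinset hl0 1).mp hζ')
      exact ⟨i, Finset.mem_range.mpr hi, rfl⟩
    · intro r _; rfl
  apply Polynomial.funext
  intro z
  simp only [eval_prod, eval_add, eval_one, eval_mul, eval_C, eval_X, eval_pow]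
  by_cases hz : z = 0
  · simp [hz, Finset.prod_const_one, zero_pow hl0.ne']
  · have hfac : ∀ r : ℕ, 1 + q ^ (2 * r + 1) * z = (-(q * z)) * (-(q * z)⁻¹ - (q ^ 2) ^ r) := by
      intro r
      have : (q * z) * (q * z)⁻¹ = 1 := mul_inv_cancel₀ (by simp [hq0, hz])
      field_simp
      ring
    simp only [hfac]
    rw [Finset.prod_mul_distrib, Finset.prod_const, hprod, Finset.card_range]
    have h1 : (-(q * z)) ^ l = -(q ^ l * z ^ l) := by
      rw [neg_pow, Odd.neg_one_pow hl, mul_pow]; ring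
    have h2 : (-(q * z)⁻¹) ^ l = -(q ^ l * z ^ l)⁻¹ := by
      rw [neg_pow, Odd.neg_one_pow hl, ← mul_pow, mul_inv]; rw [mul_pow]; ring
    rw [h1, h2, hq.pow_eq_one]
    have : z ^ l ≠ 0 := pow_ne_zero _ hz
    field_simp
    ring
/-- The central identity `a^l d^l = 1 + b^l c^l`. -/
lemma al_dl {l : ℕ} (hq : IsPrimitiveRoot q l) (hl : Odd l) :
    aq q ^ l * dq q ^ l = 1 + bq q ^ l * cq q ^ l := by
  rw [pow_ad l, keypoly hq hl, map_add, map_one, map_pow, aeval_X,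
    (Commute.mul_pow (by rw [Commute, SemiconjBy, rel_bc]) l)]

end SLqAux
namespace SLqAux

open Finsupp

abbrev V : Type := (ℤ × ℕ × ℕ) →₀ ℂ

/-- A weighted shift operator on `V`. -/
def op (f : ℤ × ℕ × ℕ → ℂ) (g : ℤ × ℕ × ℕ → ℤ × ℕ × ℕ) : V →ₗ[ℂ] V :=
  Finsupp.linearCombination ℂ (fun p => Finsupp.single (g p) (f p))

@[simp] lemma op_single (f : ℤ × ℕ × ℕ → ℂ) (g : ℤ × ℕ × ℕ → ℤ × ℕ × ℕ)
    (p : ℤ × ℕ × ℕ) (c : ℂ) :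
    op f g (Finsupp.single p c) = Finsupp.single (g p) (c * f p) := by
  rw [op, Finsupp.linearCombination_single, Finsupp.smul_single, smul_eq_mul]

def opA : V →ₗ[ℂ] V := op (fun _ => 1) (fun p => (p.1 + 1, p.2.1, p.2.2))
def opB (q : ℂ) : V →ₗ[ℂ] V := op (fun p => q ^ (-p.1)) (fun p => (p.1, p.2.1 + 1, p.2.2))
def opC (q : ℂ) : V →ₗ[ℂ] V := op (fun p => q ^ (-p.1)) (fun p => (p.1, p.2.1, p.2.2 + 1))
def opD (q : ℂ) : V →ₗ[ℂ] V :=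
  op (fun _ => 1) (fun p => (p.1 - 1, p.2.1, p.2.2)) +
    op (fun p => q ^ (1 - 2 * p.1)) (fun p => (p.1 - 1, p.2.1 + 1, p.2.2 + 1))

variable {q : ℂ}

def rho (q : ℂ) : FreeSL →ₐ[ℂ] Module.End ℂ V :=
  FreeAlgebra.lift ℂ ![opA, opB q, opC q, opD q]

@[simp] lemma rho_Fa : rho q Fa = opA := by
  rw [rho, Fa, FreeAlgebra.lift_ι_apply]; rfl
@[simp] lemma rho_Fb : rho q Fb = opB q := by
  rw [rho, Fb, FreeAlgebra.lift_ι_apply]; rfl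
@[simp] lemma rho_Fc : rho q Fc = opC q := by
  rw [rho, Fc, FreeAlgebra.lift_ι_apply]; rfl
@[simp] lemma rho_Fd : rho q Fd = opD q := by
  rw [rho, Fd, FreeAlgebra.lift_ι_apply]; rfl

lemma rho_rel (hq0 : q ≠ 0) : ∀ ⦃x y : FreeSL⦄, SLqRel q x y → rho q x = rho q y := by
  have hx0 : ∀ x : ℤ, q ^ x ≠ 0 := fun x => zpow_ne_zero x hq0
  intro x y h
  cases h with
  | ab =>
    simp only [map_mul, map_smul, rho_Fa, rho_Fb]
    apply Finsupp.lhom_ext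
    rintro ⟨x, y, z⟩ c
    simp only [Module.End.mul_apply, LinearMap.smul_apply, opA, opB, op_single,
      Finsupp.smul_single, smul_eq_mul]
    congr 1
    rw [show -(x + 1) = -x + -1 by ring]
    simp only [zpow_add₀ hq0, zpow_neg, zpow_one]
    field_simp
  | ac =>
    simp only [map_mul, map_smul, rho_Fa, rho_Fc]
    apply Finsupp.lhom_ext
    rintro ⟨x, y, z⟩ c
    simp only [Module.End.mul_apply, LinearMap.smul_apply, opA, opC, op_single,
      Finsupp.smul_single, smul_eq_mul]
    congr 1
    rw [show -(x + 1) = -x + -1 by ring]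
    simp only [zpow_add₀ hq0, zpow_neg, zpow_one]
    field_simp
  | bd =>
    simp only [map_mul, map_smul, rho_Fb, rho_Fd]
    apply Finsupp.lhom_ext
    rintro ⟨x, y, z⟩ c
    simp only [Module.End.mul_apply, LinearMap.smul_apply, LinearMap.add_apply, opB, opD,
      op_single, map_add, smul_add, Finsupp.smul_single, smul_eq_mul]
    rw [show -(x - 1) = -x + 1 by ring]
    simp only [zpow_add₀ hq0, zpow_one]
    congr 2 <;> ring
  | bc =>
    simp only [map_mul, rho_Fb, rho_Fc]
    apply Finsupp.lhom_ext
    rintro ⟨x, y, z⟩ c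
    simp only [Module.End.mul_apply, opB, opC, op_single]
  | cd =>
    simp only [map_mul, map_smul, rho_Fc, rho_Fd]
    apply Finsupp.lhom_ext
    rintro ⟨x, y, z⟩ c
    simp only [Module.End.mul_apply, LinearMap.smul_apply, LinearMap.add_apply, opC, opD,
      op_single, map_add, smul_add, Finsupp.smul_single, smul_eq_mul]
    rw [show -(x - 1) = -x + 1 by ring]
    simp only [zpow_add₀ hq0, zpow_one]
    congr 2 <;> ring
  | ad =>
    simp only [map_mul, map_smul, map_sub, rho_Fa, rho_Fb, rho_Fc, rho_Fd]
    apply Finsupp.lhom_ext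
    rintro ⟨x, y, z⟩ c
    simp only [Module.End.mul_apply, LinearMap.smul_apply, LinearMap.sub_apply,
      LinearMap.add_apply, opA, opB, opC, opD, op_single, map_add,
      Finsupp.smul_single, smul_eq_mul]
    rw [show (x + 1 - 1 : ℤ) = x by ring, show (x - 1 + 1 : ℤ) = x by ring]
    rw [add_sub_add_left_eq_sub, ← Finsupp.single_sub]
    congr 1
    rw [show (1 - 2 * x : ℤ) = 1 + -x + -x by ring,
      show (1 - 2 * (x + 1) : ℤ) = -1 + -x + -x by ring]
    simp only [zpow_add₀ hq0, zpow_neg, zpow_one]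
    ring
  | det =>
    simp only [map_mul, map_smul, map_sub, map_one, rho_Fa, rho_Fb, rho_Fc, rho_Fd]
    apply Finsupp.lhom_ext
    rintro ⟨x, y, z⟩ c
    simp only [Module.End.mul_apply, LinearMap.smul_apply, LinearMap.sub_apply,
      LinearMap.add_apply, Module.End.one_apply, opA, opB, opC, opD, op_single, map_add,
      Finsupp.smul_single, smul_eq_mul]
    rw [show (x - 1 + 1 : ℤ) = x by ring]
    have hcoef : c * q ^ (1 - 2 * x) * 1 = q * (c * q ^ (-x) * q ^ (-x)) := by
      rw [show (1 - 2 * x : ℤ) = 1 + -x + -x by ring]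
      simp only [zpow_add₀ hq0, zpow_one]
      ring
    rw [hcoef, add_sub_cancel_right]
    congr 1
    ring

end SLqAux
namespace SLqAux

open Finsupp

variable {q : ℂ}

def psi (hq0 : q ≠ 0) : ASLq q →ₐ[ℂ] Module.End ℂ V :=
  RingQuot.liftAlgHom ℂ ⟨rho q, rho_rel hq0⟩

@[simp] lemma psi_a (hq0 : q ≠ 0) : psi hq0 (aq q) = opA := by
  rw [psi, aq, RingQuot.liftAlgHom_mkAlgHom_apply, rho_Fa]
@[simp] lemma psi_b (hq0 : q ≠ 0) : psi hq0 (bq q) = opB q := by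
  rw [psi, bq, RingQuot.liftAlgHom_mkAlgHom_apply, rho_Fb]
@[simp] lemma psi_c (hq0 : q ≠ 0) : psi hq0 (cq q) = opC q := by
  rw [psi, cq, RingQuot.liftAlgHom_mkAlgHom_apply, rho_Fc]

lemma opA_pow (n : ℕ) (x : ℤ) (y z : ℕ) (c : ℂ) :
    (opA ^ n) (Finsupp.single (x, y, z) c) = Finsupp.single (x + n, y, z) c := by
  induction n with
  | zero => simp
  | succ n ih =>
    rw [pow_succ', Module.End.mul_apply, ih, opA, op_single, mul_one]
    congr 2
    push_cast
    ring

lemma opB_pow (n : ℕ) (x : ℤ) (y z : ℕ) (c : ℂ) :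
    (opB q ^ n) (Finsupp.single (x, y, z) c) =
      Finsupp.single (x, y + n, z) (c * (q ^ (-x)) ^ n) := by
  induction n with
  | zero => simp
  | succ n ih =>
    have hpt : ((x, y + n + 1, z) : ℤ × ℕ × ℕ) = (x, y + (n + 1), z) := by
      simp [add_assoc]
    rw [pow_succ', Module.End.mul_apply, ih, opB, op_single, hpt, pow_succ]
    congr 1
    ring

lemma opC_pow (n : ℕ) (x : ℤ) (y z : ℕ) (c : ℂ) :
    (opC q ^ n) (Finsupp.single (x, y, z) c) =
      Finsupp.single (x, y, z + n) (c * (q ^ (-x)) ^ n) := by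
  induction n with
  | zero => simp
  | succ n ih =>
    have hpt : ((x, y, z + n + 1) : ℤ × ℕ × ℕ) = (x, y, z + (n + 1)) := by
      simp [add_assoc]
    rw [pow_succ', Module.End.mul_apply, ih, opC, op_single, hpt, pow_succ]
    congr 1
    ring

lemma psi_mon (hq0 : q ≠ 0) (i j k : ℕ) (x : ℤ) (y z : ℕ) (c : ℂ) :
    psi hq0 (aq q ^ i * bq q ^ j * cq q ^ k) (Finsupp.single (x, y, z) c) =
      Finsupp.single (x + i, y + j, z + k) (c * (q ^ (-x)) ^ (j + k)) := by
  rw [map_mul, map_mul, map_pow, map_pow, map_pow, psi_a, psi_b, psi_c,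
    Module.End.mul_apply, Module.End.mul_apply, opC_pow, opB_pow, opA_pow]
  congr 1
  rw [pow_add]
  ring

end SLqAux
namespace SLqAux

open Finsupp

variable {q : ℂ} {l : ℕ}

def mon (q : ℂ) (w : ℕ × ℕ × ℕ) : ASLq q := aq q ^ w.1 * bq q ^ w.2.1 * cq q ^ w.2.2

def mon3 (q : ℂ) (l : ℕ) (w : ℕ × ℕ × ℕ) : ASLq q := mon q (l * w.1, l * w.2.1, l * w.2.2)

def Tspan (q : ℂ) (l : ℕ) : Submodule ℂ (ASLq q) := Submodule.span ℂ (Set.range (mon3 q l))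

lemma mon3_mem (w : ℕ × ℕ × ℕ) : mon3 q l w ∈ Tspan q l :=
  Submodule.subset_span ⟨w, rfl⟩

lemma one_mem_Tspan : (1 : ASLq q) ∈ Tspan q l := by
  have : mon3 q l (0, 0, 0) = 1 := by simp [mon3, mon]
  rw [← this]; exact mon3_mem _

section central

variable {Alg : Type*} [Ring Alg] [Algebra ℂ Alg]

lemma central_pow (z : Alg) (h : ∀ x, z * x = x * z) (n : ℕ) :
    ∀ x, z ^ n * x = x * z ^ n := by
  intro x
  induction n with
  | zero => simp
  | succ n ih => rw [pow_succ, mul_assoc, h, ← mul_assoc, ih, mul_assoc]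

lemma cswap (z w x : Alg) (h : z * w = w * z) : z * (w * x) = w * (z * x) := by
  rw [← mul_assoc, h, mul_assoc]

end central

lemma mon3_mul (hq : IsPrimitiveRoot q l) (hl : Odd l) (w w' : ℕ × ℕ × ℕ) :
    mon3 q l w * mon3 q l w' = mon3 q l (w + w') := by
  obtain ⟨i, j, k⟩ := w
  obtain ⟨i', j', k'⟩ := w'
  have hA : ∀ (m : ℕ) (x : ASLq q), aq q ^ (l * m) * x = x * aq q ^ (l * m) := by
    intro m x
    rw [pow_mul]
    exact central_pow _ (fun y => (al_central hq hl y)) m x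
  have hB : ∀ (m : ℕ) (x : ASLq q), bq q ^ (l * m) * x = x * bq q ^ (l * m) := by
    intro m x
    rw [pow_mul]
    exact central_pow _ (fun y => (bl_central hq y)) m x
  have hC : ∀ (m : ℕ) (x : ASLq q), cq q ^ (l * m) * x = x * cq q ^ (l * m) := by
    intro m x
    rw [pow_mul]
    exact central_pow _ (fun y => (cl_central hq y)) m x
  show aq q ^ (l * i) * bq q ^ (l * j) * cq q ^ (l * k) *
      (aq q ^ (l * i') * bq q ^ (l * j') * cq q ^ (l * k')) =
      aq q ^ (l * (i + i')) * bq q ^ (l * (j + j')) * cq q ^ (l * (k + k'))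
  simp only [Nat.mul_add, pow_add, mul_assoc]
  rw [cswap _ _ _ (hC k (aq q ^ (l * i'))), cswap _ _ _ (hB j (aq q ^ (l * i'))),
    cswap _ _ _ (hC k (bq q ^ (l * j')))]

lemma Tspan_mul (hq : IsPrimitiveRoot q l) (hl : Odd l) {x y : ASLq q}
    (hx : x ∈ Tspan q l) (hy : y ∈ Tspan q l) : x * y ∈ Tspan q l := by
  induction hx using Submodule.span_induction with
  | mem x hx =>
    obtain ⟨w, rfl⟩ := hx
    induction hy using Submodule.span_induction with
    | mem y hy =>
      obtain ⟨w', rfl⟩ := hy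
      rw [mon3_mul hq hl]
      exact mon3_mem _
    | zero => rw [mul_zero]; exact zero_mem _
    | add y z _ _ hy hz => rw [mul_add]; exact add_mem hy hz
    | smul c y _ hy => rw [mul_smul_comm]; exact Submodule.smul_mem _ _ hy
  | zero => rw [zero_mul]; exact zero_mem _
  | add x z _ _ hx hz => rw [add_mul]; exact add_mem hx hz
  | smul c x _ hx => rw [smul_mul_assoc]; exact Submodule.smul_mem _ _ hx

/-- the base point -/
def e0 : V := Finsupp.single ((0 : ℤ), (0 : ℕ), (0 : ℕ)) (1 : ℂ)

/-- index embedding -/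
def iota (l : ℕ) (v : Fin l × Fin l × Fin l) (w : ℕ × ℕ × ℕ) : ℤ × ℕ × ℕ :=
  (((l * w.1 + (v.1 : ℕ) : ℕ) : ℤ), l * w.2.1 + (v.2.1 : ℕ), l * w.2.2 + (v.2.2 : ℕ))

lemma div_mod_unique' (hl0 : 0 < l) (a r a' r' : ℕ) (hr : r < l) (hr' : r' < l)
    (h : l * a + r = l * a' + r') : a = a' ∧ r = r' := by
  have h1 : r = (l * a + r) % l := by rw [Nat.mul_add_mod, Nat.mod_eq_of_lt hr]
  have h2 : r' = (l * a' + r') % l := by rw [Nat.mul_add_mod, Nat.mod_eq_of_lt hr']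
  have hrr : r = r' := by rw [h1, h2, h]
  refine ⟨?_, hrr⟩
  have : l * a = l * a' := by omega
  exact Nat.eq_of_mul_eq_mul_left hl0 this

lemma iota_inj (hl0 : 0 < l) (v v' : Fin l × Fin l × Fin l) (w w' : ℕ × ℕ × ℕ)
    (h : iota l v w = iota l v' w') : v = v' ∧ w = w' := by
  rw [iota, iota, Prod.mk.injEq, Prod.mk.injEq] at h
  obtain ⟨h1, h2, h3⟩ := h
  have h1' : l * w.1 + (v.1 : ℕ) = l * w'.1 + (v'.1 : ℕ) := by exact_mod_cast h1
  obtain ⟨e1a, e1b⟩ := div_mod_unique' hl0 _ _ _ _ v.1.isLt v'.1.isLt h1'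
  obtain ⟨e2a, e2b⟩ := div_mod_unique' hl0 _ _ _ _ v.2.1.isLt v'.2.1.isLt h2
  obtain ⟨e3a, e3b⟩ := div_mod_unique' hl0 _ _ _ _ v.2.2.isLt v'.2.2.isLt h3
  constructor
  · exact Prod.ext (Fin.ext e1b) (Prod.ext (Fin.ext e2b) (Fin.ext e3b))
  · exact Prod.ext e1a (Prod.ext e2a e3a)

lemma psi_mon_e0 (hq : IsPrimitiveRoot q l) (hl : Odd l) (v : Fin l × Fin l × Fin l) :
    psi (q_ne_zero hq hl) (mon q ((v.1 : ℕ), (v.2.1 : ℕ), (v.2.2 : ℕ))) e0 =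
      Finsupp.single (((v.1 : ℕ) : ℤ), (v.2.1 : ℕ), (v.2.2 : ℕ)) 1 := by
  have := psi_mon (q_ne_zero hq hl) (v.1 : ℕ) (v.2.1 : ℕ) (v.2.2 : ℕ) 0 0 0 1
  simpa [e0, mon] using this

lemma psi_mon3_single (hq : IsPrimitiveRoot q l) (hl : Odd l) (w : ℕ × ℕ × ℕ)
    (v : Fin l × Fin l × Fin l) :
    psi (q_ne_zero hq hl) (mon3 q l w)
        (Finsupp.single (((v.1 : ℕ) : ℤ), (v.2.1 : ℕ), (v.2.2 : ℕ)) 1) =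
      Finsupp.single (iota l v w) 1 := by
  have h := psi_mon (q_ne_zero hq hl) (l * w.1) (l * w.2.1) (l * w.2.2)
    ((v.1 : ℕ) : ℤ) (v.2.1 : ℕ) (v.2.2 : ℕ) 1
  rw [mon3, mon] at *
  rw [h]
  have hc : ((q ^ (-((v.1 : ℕ) : ℤ))) ^ (l * w.2.1 + l * w.2.2) : ℂ) = 1 := by
    rw [← Nat.mul_add, pow_mul]
    have hbase : ((q ^ (-((v.1 : ℕ) : ℤ))) ^ l : ℂ) = 1 := by
      rw [← zpow_natCast (q ^ (-((v.1 : ℕ) : ℤ))) l, ← zpow_mul, mul_comm, zpow_mul,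
        zpow_natCast, hq.pow_eq_one, one_zpow]
    rw [hbase, one_pow]
  rw [hc, mul_one]
  congr 1
  rw [iota]
  refine Prod.ext ?_ (Prod.ext ?_ ?_)
  · push_cast; ring
  · show (v.2.1 : ℕ) + l * w.2.1 = l * w.2.1 + (v.2.1 : ℕ); ring
  · show (v.2.2 : ℕ) + l * w.2.2 = l * w.2.2 + (v.2.2 : ℕ); ring

lemma key (hq : IsPrimitiveRoot q l) (hl : Odd l) (t : Fin l × Fin l × Fin l → ASLq q)
    (ht : ∀ v, t v ∈ Tspan q l)
    (hsum : ∑ v : Fin l × Fin l × Fin l,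
      t v * mon q ((v.1 : ℕ), (v.2.1 : ℕ), (v.2.2 : ℕ)) = 0) :
    ∀ v, t v = 0 := by
  classical
  have hq0 := q_ne_zero hq hl
  have hl0 : 0 < l := hl.pos
  choose f hf using fun v => (Finsupp.mem_span_range_iff_exists_finsupp).mp (ht v)
  have hmain : ∀ v, psi hq0 (t v * mon q ((v.1 : ℕ), (v.2.1 : ℕ), (v.2.2 : ℕ))) e0 =
      Finsupp.mapDomain (iota l v) (f v) := by
    intro v
    rw [← hf v, Finsupp.sum_mul, Finsupp.sum, map_sum, Finsupp.mapDomain]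
    rw [Finsupp.sum, LinearMap.sum_apply]
    apply Finset.sum_congr rfl
    intro w _
    rw [smul_mul_assoc, map_smul, LinearMap.smul_apply, map_mul, Module.End.mul_apply,
      psi_mon_e0 hq hl, psi_mon3_single hq hl, Finsupp.smul_single, smul_eq_mul, mul_one]
  have h0 : (∑ v : Fin l × Fin l × Fin l, Finsupp.mapDomain (iota l v) (f v)) = (0 : V) := by
    calc ∑ v : Fin l × Fin l × Fin l, Finsupp.mapDomain (iota l v) (f v)
        = ∑ v : Fin l × Fin l × Fin l,
            psi hq0 (t v * mon q ((v.1 : ℕ), (v.2.1 : ℕ), (v.2.2 : ℕ))) e0 :=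
          Finset.sum_congr rfl (fun v _ => (hmain v).symm)
      _ = (∑ v : Fin l × Fin l × Fin l,
            psi hq0 (t v * mon q ((v.1 : ℕ), (v.2.1 : ℕ), (v.2.2 : ℕ)))) e0 :=
          (LinearMap.sum_apply _ _ _).symm
      _ = psi hq0 (∑ v : Fin l × Fin l × Fin l,
            t v * mon q ((v.1 : ℕ), (v.2.1 : ℕ), (v.2.2 : ℕ))) e0 := by rw [map_sum]
      _ = 0 := by rw [hsum, map_zero]; rfl
  intro v
  rw [← hf v]
  have hfv : f v = 0 := by
    ext w
    have := congrArg (fun (F : V) => F (iota l v w)) h0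
    rw [Finsupp.finset_sum_apply] at this
    rw [Finset.sum_eq_single v] at this
    · rw [Finsupp.mapDomain_apply (fun w1 w2 hw => ((iota_inj hl0 v v w1 w2 hw).2)) (f v) w]
        at this
      exact this
    · intro v' _ hv'
      apply Finsupp.mapDomain_notin_range
      rintro ⟨w', hw'⟩
      exact hv' ((iota_inj hl0 v' v w' w hw').1)
    · intro h; exact absurd (Finset.mem_univ v) h
  rw [hfv]
  simp

end SLqAux
namespace SLqAux

variable {q : ℂ} {l : ℕ}

section scalars2
variable {Alg : Type*} [Ring Alg] [Algebra ℂ Alg]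

lemma eq_inv_smul' (t : ℂ) (ht : t ≠ 0) (x y : Alg) (h : x = t • y) : y = t⁻¹ • x := by
  rw [h, smul_smul, inv_mul_cancel₀ ht, one_smul]

end scalars2

lemma a_mon (i j k : ℕ) : aq q * mon q (i, j, k) = mon q (i + 1, j, k) := by
  rw [mon, mon, ← mul_assoc, ← mul_assoc, ← pow_succ']

lemma b_mon (hq0 : q ≠ 0) (i j k : ℕ) :
    bq q * mon q (i, j, k) = ((q : ℂ) ^ i)⁻¹ • mon q (i, j + 1, k) := by
  have hba : bq q * aq q ^ i = ((q : ℂ) ^ i)⁻¹ • (aq q ^ i * bq q) :=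
    eq_inv_smul' _ (pow_ne_zero _ hq0) _ _ (sc_pow_left q (aq q) (bq q) rel_ab i)
  rw [mon, mon, ← mul_assoc, ← mul_assoc, hba, smul_mul_assoc, smul_mul_assoc,
    mul_assoc (aq q ^ i) (bq q) (bq q ^ j), ← pow_succ']

lemma c_mon (hq0 : q ≠ 0) (i j k : ℕ) :
    cq q * mon q (i, j, k) = ((q : ℂ) ^ i)⁻¹ • mon q (i, j, k + 1) := by
  have hca : cq q * aq q ^ i = ((q : ℂ) ^ i)⁻¹ • (aq q ^ i * cq q) :=
    eq_inv_smul' _ (pow_ne_zero _ hq0) _ _ (sc_pow_left q (aq q) (cq q) rel_ac i)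
  have hcb : cq q * bq q ^ j = bq q ^ j * cq q := (bl_c (l' := j)).symm
  rw [mon, mon, ← mul_assoc, ← mul_assoc, hca, smul_mul_assoc, smul_mul_assoc,
    mul_assoc (aq q ^ i) (cq q) (bq q ^ j), hcb, ← mul_assoc,
    mul_assoc _ (cq q) (cq q ^ k), ← pow_succ']

lemma mon_al (j k : ℕ) : mon q (l, j, k) = aq q ^ l * mon q (0, j, k) := by
  simp [mon, mul_assoc]

lemma mon_bl (hq : IsPrimitiveRoot q l) (i k : ℕ) :
    mon q (i, l, k) = bq q ^ l * mon q (i, 0, k) := by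
  simp only [mon, pow_zero, mul_one]
  rw [← bl_central hq (aq q ^ i), mul_assoc]

lemma mon_cl (hq : IsPrimitiveRoot q l) (i j : ℕ) :
    mon q (i, j, l) = cq q ^ l * mon q (i, j, 0) := by
  simp only [mon, pow_zero, mul_one]
  rw [← cl_central hq (aq q ^ i * bq q ^ j)]

lemma alN_mem (N : ℕ) : (aq q ^ l) ^ N ∈ Tspan q l := by
  have : (aq q ^ l) ^ N = mon3 q l (N, 0, 0) := by
    simp [mon3, mon, ← pow_mul]
  rw [this]; exact mon3_mem _

lemma al_mem : aq q ^ l ∈ Tspan q l := by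
  have := alN_mem (q := q) (l := l) 1
  simpa using this

lemma bl_mem : bq q ^ l ∈ Tspan q l := by
  have : bq q ^ l = mon3 q l (0, 1, 0) := by simp [mon3, mon]
  rw [this]; exact mon3_mem _

lemma cl_mem : cq q ^ l ∈ Tspan q l := by
  have : cq q ^ l = mon3 q l (0, 0, 1) := by simp [mon3, mon]
  rw [this]; exact mon3_mem _

lemma blcl_mem : bq q ^ l * cq q ^ l ∈ Tspan q l := by
  have : bq q ^ l * cq q ^ l = mon3 q l (0, 1, 1) := by simp [mon3, mon]
  rw [this]; exact mon3_mem _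

end SLqAux


open SLqAux

/-- Localization of `A(SL_q(2))` at the central element `α = a^l`, for `q` a
primitive `l`-th root of unity, `l` odd.  We formulate the localization by its
universal property: `R` is any `ℂ`-algebra receiving `A(SL_q(2))` via `φ` such
that `φ(α)` is invertible with inverse `u`, every element of `R` has the form
`φ(x) u^n`, and the kernel of `φ` is the `α`-torsion.  Then `φ(a)` is invertible
with inverse `u φ(a)^(l-1)`, and `R` is a free module over the localized
classical subalgebra `A(SL(2))[α⁻¹]` (generated by the images of
`a^l, b^l, c^l, d^l` and `u`) with basis the `l^3` monomials
`φ(a)^{ra} φ(b)^{rb} φ(c)^{rc}`, `0 ≤ ra, rb, rc ≤ l-1`. -/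
theorem stmt15 (q : ℂ) (l : ℕ) (hq : IsPrimitiveRoot q l) (hl : Odd l)
    (R : Type) [Ring R] [Algebra ℂ R] (φ : ASLq q →ₐ[ℂ] R) (u : R)
    (hu₁ : φ (aq q ^ l) * u = 1) (hu₂ : u * φ (aq q ^ l) = 1)
    (hsurj : ∀ y : R, ∃ (x : ASLq q) (n : ℕ), y = φ x * u ^ n)
    (hker : ∀ x : ASLq q, φ x = 0 → ∃ n : ℕ, x * (aq q ^ l) ^ n = 0) :
    (φ (aq q) * (u * φ (aq q) ^ (l - 1)) = 1 ∧
      (u * φ (aq q) ^ (l - 1)) * φ (aq q) = 1) ∧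
    LinearIndependent
      (Algebra.adjoin ℂ
        ({φ (aq q ^ l), φ (bq q ^ l), φ (cq q ^ l), φ (dq q ^ l), u} : Set R))
      (fun v : Fin l × Fin l × Fin l =>
        φ (aq q) ^ (v.1 : ℕ) * φ (bq q) ^ (v.2.1 : ℕ) * φ (cq q) ^ (v.2.2 : ℕ)) ∧
    Submodule.span
      (Algebra.adjoin ℂ
        ({φ (aq q ^ l), φ (bq q ^ l), φ (cq q ^ l), φ (dq q ^ l), u} : Set R))
      (Set.range (fun v : Fin l × Fin l × Fin l =>
        φ (aq q) ^ (v.1 : ℕ) * φ (bq q) ^ (v.2.1 : ℕ) * φ (cq q) ^ (v.2.2 : ℕ))) =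
      ⊤ := by
  classical
  have hq0 : q ≠ 0 := q_ne_zero hq hl
  have hl0 : 0 < l := hl.pos
  set S : Subalgebra ℂ R :=
    Algebra.adjoin ℂ ({φ (aq q ^ l), φ (bq q ^ l), φ (cq q ^ l), φ (dq q ^ l), u} : Set R)
    with hS
  set mfun : Fin l × Fin l × Fin l → R := fun v =>
    φ (aq q) ^ (v.1 : ℕ) * φ (bq q) ^ (v.2.1 : ℕ) * φ (cq q) ^ (v.2.2 : ℕ) with hmfun
  have hAy : ∀ y : R, φ (aq q ^ l) * y = y * φ (aq q ^ l) := by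
    intro y
    obtain ⟨x, n, rfl⟩ := hsurj y
    have h1 : φ (aq q ^ l) * φ x = φ x * φ (aq q ^ l) := by
      rw [← map_mul, ← map_mul, al_central hq hl]
    have hcAu : Commute (φ (aq q ^ l)) u := by
      show _ = _
      rw [hu₁, hu₂]
    rw [← mul_assoc, h1, mul_assoc, (hcAu.pow_right n).eq, ← mul_assoc]
  have huy : ∀ y : R, u * y = y * u := by
    intro y
    obtain ⟨x, n, rfl⟩ := hsurj y
    have h1 : u * φ x = φ x * u := by
      calc u * φ x = u * φ x * (φ (aq q ^ l) * u) := by rw [hu₁, mul_one]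
        _ = u * (φ x * φ (aq q ^ l)) * u := by noncomm_ring
        _ = u * (φ (aq q ^ l) * φ x) * u := by rw [← hAy (φ x)]
        _ = (u * φ (aq q ^ l)) * (φ x * u) := by noncomm_ring
        _ = φ x * u := by rw [hu₂, one_mul]
    calc u * (φ x * u ^ n) = (u * φ x) * u ^ n := by rw [mul_assoc]
      _ = (φ x * u) * u ^ n := by rw [h1]
      _ = φ x * u ^ (n + 1) := by rw [mul_assoc, ← pow_succ']
      _ = φ x * u ^ n * u := by rw [pow_succ, ← mul_assoc]
  have commu_gen : ∀ z : ASLq q, (∀ x, z * x = x * z) → ∀ y : R, φ z * y = y * φ z := by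
    intro z hz y
    obtain ⟨x, n, rfl⟩ := hsurj y
    have h1 : φ z * φ x = φ x * φ z := by rw [← map_mul, ← map_mul, hz]
    have hcu : Commute (φ z) u := (huy (φ z)).symm
    rw [← mul_assoc, h1, mul_assoc, (hcu.pow_right n).eq, ← mul_assoc]
  have hBy : ∀ y : R, φ (bq q ^ l) * y = y * φ (bq q ^ l) := commu_gen _ (bl_central hq)
  have hCy : ∀ y : R, φ (cq q ^ l) * y = y * φ (cq q ^ l) := commu_gen _ (cl_central hq)
  have hDA : φ (dq q ^ l) * φ (aq q ^ l) = φ (1 + bq q ^ l * cq q ^ l) := by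
    rw [← map_mul, ← al_central hq hl (dq q ^ l), al_dl hq hl]
  have hDu : φ (dq q ^ l) = u * φ (1 + bq q ^ l * cq q ^ l) := by
    calc φ (dq q ^ l) = (u * φ (aq q ^ l)) * φ (dq q ^ l) := by rw [hu₂, one_mul]
      _ = u * (φ (dq q ^ l) * φ (aq q ^ l)) := by rw [mul_assoc, hAy (φ (dq q ^ l))]
      _ = u * φ (1 + bq q ^ l * cq q ^ l) := by rw [hDA]
  have hEy : ∀ y : R, φ (1 + bq q ^ l * cq q ^ l) * y = y * φ (1 + bq q ^ l * cq q ^ l) := by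
    intro y
    simp only [map_add, map_one, map_mul]
    rw [add_mul, mul_add, one_mul, mul_one, mul_assoc, hCy y, ← mul_assoc, hBy y, mul_assoc]
  have hDy : ∀ y : R, φ (dq q ^ l) * y = y * φ (dq q ^ l) := by
    intro y
    rw [hDu, mul_assoc, hEy y, ← mul_assoc, huy y, mul_assoc]
  have hSy : ∀ s ∈ S, ∀ y : R, s * y = y * s := by
    intro s hs
    rw [hS] at hs
    induction hs using Algebra.adjoin_induction with
    | mem x hx =>
      simp only [Set.mem_insert_iff, Set.mem_singleton_iff] at hx
      rcases hx with rfl | rfl | rfl | rfl | rfl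
      · exact hAy
      · exact hBy
      · exact hCy
      · exact hDy
      · exact huy
    | algebraMap r => intro y; exact (Algebra.commutes r y)
    | add s t _ _ hs ht => intro y; rw [add_mul, mul_add, hs y, ht y]
    | mul s t _ _ hs ht => intro y; rw [mul_assoc, ht y, ← mul_assoc, hs y, mul_assoc]
  have hAc : ∀ (n : ℕ) (y : R), φ (aq q ^ l) ^ n * y = y * φ (aq q ^ l) ^ n :=
    fun n y => central_pow _ hAy n y
  -- Part 1
  have hpow : φ (aq q) * φ (aq q) ^ (l - 1) = φ (aq q ^ l) := by
    rw [← pow_succ', show l - 1 + 1 = l by omega, map_pow]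
  have hpow' : φ (aq q) ^ (l - 1) * φ (aq q) = φ (aq q ^ l) := by
    rw [← pow_succ, show l - 1 + 1 = l by omega, map_pow]
  have hinv1 : φ (aq q) * (u * φ (aq q) ^ (l - 1)) = 1 := by
    rw [← mul_assoc, ← huy (φ (aq q)), mul_assoc, hpow, hu₂]
  have hinv2 : (u * φ (aq q) ^ (l - 1)) * φ (aq q) = 1 := by
    rw [mul_assoc, hpow', hu₂]
  have hsmul : ∀ (s : S) (x : R), s • x = (s : R) * x := fun _ _ => rfl
  have hmphi : ∀ v : Fin l × Fin l × Fin l,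
      mfun v = φ (mon q ((v.1 : ℕ), (v.2.1 : ℕ), (v.2.2 : ℕ))) := by
    intro v
    rw [hmfun, mon]
    simp only [map_mul, map_pow]
  refine ⟨⟨hinv1, hinv2⟩, ?_, ?_⟩
  · -- linear independence
    rw [Fintype.linearIndependent_iff]
    intro g hg
    have hclear : ∀ s : R, s ∈ S → ∃ (N : ℕ) (t : ASLq q), t ∈ Tspan q l ∧
        s * φ (aq q ^ l) ^ N = φ t := by
      intro s hs
      rw [hS] at hs
      induction hs using Algebra.adjoin_induction with
      | mem x hx =>
        simp only [Set.mem_insert_iff, Set.mem_singleton_iff] at hx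
        rcases hx with rfl | rfl | rfl | rfl | rfl
        · exact ⟨0, aq q ^ l, al_mem, by rw [pow_zero, mul_one]⟩
        · exact ⟨0, bq q ^ l, bl_mem, by rw [pow_zero, mul_one]⟩
        · exact ⟨0, cq q ^ l, cl_mem, by rw [pow_zero, mul_one]⟩
        · exact ⟨1, 1 + bq q ^ l * cq q ^ l, add_mem one_mem_Tspan blcl_mem,
            by rw [pow_one, hDA]⟩
        · exact ⟨1, 1, one_mem_Tspan, by rw [pow_one, hu₂, map_one]⟩
      | algebraMap r =>
        refine ⟨0, algebraMap ℂ (ASLq q) r, ?_, ?_⟩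
        · rw [Algebra.algebraMap_eq_smul_one]
          exact Submodule.smul_mem _ _ one_mem_Tspan
        · rw [pow_zero, mul_one, AlgHom.commutes]
      | add s t _ _ hs ht =>
        obtain ⟨N₁, t₁, ht₁, he₁⟩ := hs
        obtain ⟨N₂, t₂, ht₂, he₂⟩ := ht
        refine ⟨N₁ + N₂, t₁ * (aq q ^ l) ^ N₂ + t₂ * (aq q ^ l) ^ N₁,
          add_mem (Tspan_mul hq hl ht₁ (alN_mem N₂)) (Tspan_mul hq hl ht₂ (alN_mem N₁)), ?_⟩
        rw [map_add, map_mul, map_mul, map_pow φ (aq q ^ l) N₂, map_pow φ (aq q ^ l) N₁, ← he₁, ← he₂, add_mul]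
        congr 1
        · rw [pow_add, ← mul_assoc]
        · rw [add_comm N₁ N₂, pow_add, ← mul_assoc]
      | mul s t _ _ hs ht =>
        obtain ⟨N₁, t₁, ht₁, he₁⟩ := hs
        obtain ⟨N₂, t₂, ht₂, he₂⟩ := ht
        refine ⟨N₁ + N₂, t₁ * t₂, Tspan_mul hq hl ht₁ ht₂, ?_⟩
        rw [map_mul, ← he₁, ← he₂, pow_add]
        calc s * t * (φ (aq q ^ l) ^ N₁ * φ (aq q ^ l) ^ N₂)
            = s * ((t * φ (aq q ^ l) ^ N₁) * φ (aq q ^ l) ^ N₂) := by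
              rw [mul_assoc, ← mul_assoc t]
          _ = s * ((φ (aq q ^ l) ^ N₁ * t) * φ (aq q ^ l) ^ N₂) := by rw [← hAc N₁ t]
          _ = (s * φ (aq q ^ l) ^ N₁) * (t * φ (aq q ^ l) ^ N₂) := by
              rw [mul_assoc (φ (aq q ^ l) ^ N₁), ← mul_assoc, ← mul_assoc]
    choose N t ht he using fun v => hclear (g v : R) (g v).2
    set Nt : ℕ := ∑ v : Fin l × Fin l × Fin l, N v with hNt
    have hNle : ∀ v, N v ≤ Nt :=
      fun v => Finset.single_le_sum (f := N) (fun _ _ => Nat.zero_le _) (Finset.mem_univ v)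
    have hpad : ∀ v, ∃ t' , t' ∈ Tspan q l ∧ (g v : R) * φ (aq q ^ l) ^ Nt = φ t' := by
      intro v
      refine ⟨t v * (aq q ^ l) ^ (Nt - N v), Tspan_mul hq hl (ht v) (alN_mem _), ?_⟩
      have hsplit : φ (aq q ^ l) ^ Nt = φ (aq q ^ l) ^ (N v) * φ (aq q ^ l) ^ (Nt - N v) := by
        rw [← pow_add]
        congr 1
        have := hNle v
        omega
      rw [hsplit, ← mul_assoc, he v, map_mul, map_pow φ (aq q ^ l) (Nt - N v)]
    choose t' ht' he' using hpad
    have hterm : ∀ v, φ (t' v * mon q ((v.1 : ℕ), (v.2.1 : ℕ), (v.2.2 : ℕ))) =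
        ((g v : R) * mfun v) * φ (aq q ^ l) ^ Nt := by
      intro v
      rw [map_mul, ← he' v, ← hmphi v, mul_assoc, hAc Nt (mfun v), ← mul_assoc]
    have hsum0 : φ (∑ v : Fin l × Fin l × Fin l,
        t' v * mon q ((v.1 : ℕ), (v.2.1 : ℕ), (v.2.2 : ℕ))) = 0 := by
      rw [map_sum]
      calc ∑ v : Fin l × Fin l × Fin l,
            φ (t' v * mon q ((v.1 : ℕ), (v.2.1 : ℕ), (v.2.2 : ℕ)))
          = ∑ v : Fin l × Fin l × Fin l, ((g v : R) * mfun v) * φ (aq q ^ l) ^ Nt :=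
            Finset.sum_congr rfl (fun v _ => hterm v)
        _ = (∑ v : Fin l × Fin l × Fin l, (g v : R) * mfun v) * φ (aq q ^ l) ^ Nt :=
            (Finset.sum_mul _ _ _).symm
        _ = (∑ v : Fin l × Fin l × Fin l, g v • mfun v) * φ (aq q ^ l) ^ Nt := by
            rw [Finset.sum_congr rfl (fun v _ => (hsmul (g v) (mfun v)).symm)]
        _ = 0 := by rw [hg, zero_mul]
    obtain ⟨n, hn⟩ := hker _ hsum0
    have hacent : ∀ (m : ℕ) (x : ASLq q), x * (aq q ^ l) ^ m = (aq q ^ l) ^ m * x :=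
      fun m x => (central_pow _ (al_central hq hl) m x).symm
    rw [Finset.sum_mul] at hn
    have hn' : ∑ v : Fin l × Fin l × Fin l,
        (t' v * (aq q ^ l) ^ n) * mon q ((v.1 : ℕ), (v.2.1 : ℕ), (v.2.2 : ℕ)) = 0 := by
      rw [← hn]
      apply Finset.sum_congr rfl
      intro v _
      rw [mul_assoc, mul_assoc, ← hacent n (mon q ((v.1 : ℕ), (v.2.1 : ℕ), (v.2.2 : ℕ)))]
    have hkey := key hq hl (fun v => t' v * (aq q ^ l) ^ n)
      (fun v => Tspan_mul hq hl (ht' v) (alN_mem n)) (by simpa using hn')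
    intro v
    have h1 : φ (t' v * (aq q ^ l) ^ n) = 0 := by
      rw [show t' v * (aq q ^ l) ^ n = 0 from hkey v, map_zero]
    rw [map_mul, ← he' v, map_pow φ (aq q ^ l) n] at h1
    have h2 : (g v : R) * φ (aq q ^ l) ^ (Nt + n) = 0 := by
      rw [pow_add, ← mul_assoc]
      exact h1
    have hAuinv : ∀ m : ℕ, φ (aq q ^ l) ^ m * u ^ m = 1 := by
      intro m
      have hcAu : Commute (φ (aq q ^ l)) u := by
        show _ = _
        rw [hu₁, hu₂]
      rw [← hcAu.mul_pow, hu₁, one_pow]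
    have hzero : (g v : R) = 0 := by
      calc (g v : R) = (g v : R) * (φ (aq q ^ l) ^ (Nt + n) * u ^ (Nt + n)) := by
            rw [hAuinv, mul_one]
        _ = ((g v : R) * φ (aq q ^ l) ^ (Nt + n)) * u ^ (Nt + n) := by rw [mul_assoc]
        _ = 0 := by rw [h2, zero_mul]
    exact Subtype.ext hzero
  · -- spanning
    rw [eq_top_iff]
    intro y _
    set M : Submodule S R := Submodule.span S (Set.range mfun) with hM
    show y ∈ M
    have hmem : ∀ (s : R), s ∈ S → ∀ x : R, x ∈ M → s * x ∈ M := by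
      intro s hs x hx
      have : s * x = (⟨s, hs⟩ : S) • x := (hsmul ⟨s, hs⟩ x).symm
      rw [this]
      exact Submodule.smul_mem _ _ hx
    have hz : ∀ (z : ℂ) (x : R), x ∈ M → z • x ∈ M := by
      intro z x hx
      rw [Algebra.smul_def]
      exact hmem _ (S.algebraMap_mem z) x hx
    have hgen : ∀ v : Fin l × Fin l × Fin l,
        φ (mon q ((v.1 : ℕ), (v.2.1 : ℕ), (v.2.2 : ℕ))) ∈ M := by
      intro v
      rw [← hmphi v]
      exact Submodule.subset_span ⟨v, rfl⟩
    have hAS : φ (aq q ^ l) ∈ S := Algebra.subset_adjoin (by simp)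
    have hBS : φ (bq q ^ l) ∈ S := Algebra.subset_adjoin (by simp)
    have hCS : φ (cq q ^ l) ∈ S := Algebra.subset_adjoin (by simp)
    have huS : u ∈ S := Algebra.subset_adjoin (by simp)
    have hstepa : ∀ v : Fin l × Fin l × Fin l, φ (aq q) * mfun v ∈ M := by
      rintro ⟨⟨ra, hra⟩, ⟨rb, hrb⟩, ⟨rc, hrc⟩⟩
      rw [hmphi, ← map_mul]
      show φ (aq q * mon q (ra, rb, rc)) ∈ M
      rw [a_mon]
      by_cases h : ra + 1 = l
      · rw [h, mon_al, map_mul]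
        exact hmem _ hAS _ (hgen (⟨0, hl0⟩, ⟨rb, hrb⟩, ⟨rc, hrc⟩))
      · exact hgen (⟨ra + 1, by omega⟩, ⟨rb, hrb⟩, ⟨rc, hrc⟩)
    have hstepb : ∀ v : Fin l × Fin l × Fin l, φ (bq q) * mfun v ∈ M := by
      rintro ⟨⟨ra, hra⟩, ⟨rb, hrb⟩, ⟨rc, hrc⟩⟩
      rw [hmphi, ← map_mul]
      show φ (bq q * mon q (ra, rb, rc)) ∈ M
      rw [b_mon hq0, map_smul]
      apply hz
      by_cases h : rb + 1 = l
      · rw [h, mon_bl hq, map_mul]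
        exact hmem _ hBS _ (hgen (⟨ra, hra⟩, ⟨0, hl0⟩, ⟨rc, hrc⟩))
      · exact hgen (⟨ra, hra⟩, ⟨rb + 1, by omega⟩, ⟨rc, hrc⟩)
    have hstepc : ∀ v : Fin l × Fin l × Fin l, φ (cq q) * mfun v ∈ M := by
      rintro ⟨⟨ra, hra⟩, ⟨rb, hrb⟩, ⟨rc, hrc⟩⟩
      rw [hmphi, ← map_mul]
      show φ (cq q * mon q (ra, rb, rc)) ∈ M
      rw [c_mon hq0, map_smul]
      apply hz
      by_cases h : rc + 1 = l
      · rw [h, mon_cl hq, map_mul]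
        exact hmem _ hCS _ (hgen (⟨ra, hra⟩, ⟨rb, hrb⟩, ⟨0, hl0⟩))
      · exact hgen (⟨ra, hra⟩, ⟨rb, hrb⟩, ⟨rc + 1, by omega⟩)
    have hmul_gen : ∀ z : R, (∀ v, z * mfun v ∈ M) → (∀ s : S, z * (s : R) = (s : R) * z) →
        ∀ x ∈ M, z * x ∈ M := by
      intro z hzv hzs x hx
      induction hx using Submodule.span_induction with
      | mem x hx =>
        obtain ⟨v, rfl⟩ := hx
        exact hzv v
      | zero => rw [mul_zero]; exact zero_mem _
      | add x y _ _ hx hy => rw [mul_add]; exact add_mem hx hy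
      | smul s x _ hx =>
        rw [hsmul, ← mul_assoc, hzs s, mul_assoc, ← hsmul s (z * x)]
        exact Submodule.smul_mem _ _ hx
    have hcomm' : ∀ z : R, ∀ s : S, z * (s : R) = (s : R) * z :=
      fun z s => (hSy (s : R) s.2 z).symm
    have hmula : ∀ x ∈ M, φ (aq q) * x ∈ M :=
      hmul_gen _ hstepa (hcomm' _)
    have hmulb : ∀ x ∈ M, φ (bq q) * x ∈ M :=
      hmul_gen _ hstepb (hcomm' _)
    have hmulc : ∀ x ∈ M, φ (cq q) * x ∈ M :=
      hmul_gen _ hstepc (hcomm' _)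
    have hmulu : ∀ x ∈ M, u * x ∈ M := fun x hx => hmem u huS x hx
    have hmulapow : ∀ (n : ℕ), ∀ x ∈ M, φ (aq q) ^ n * x ∈ M := by
      intro n
      induction n with
      | zero => intro x hx; simpa using hx
      | succ n ih =>
        intro x hx
        rw [pow_succ', mul_assoc]
        exact hmula _ (ih x hx)
    have hmuld : ∀ x ∈ M, φ (dq q) * x ∈ M := by
      have h1 : φ (aq q) * φ (dq q) = 1 + q • (φ (bq q) * φ (cq q)) := by
        rw [← map_mul, ad_eq]
        simp only [map_add, map_one, map_smul, map_mul]
      have hdexp : φ (dq q) =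
          (u * φ (aq q) ^ (l - 1)) * (1 + q • (φ (bq q) * φ (cq q))) := by
        calc φ (dq q) = ((u * φ (aq q) ^ (l - 1)) * φ (aq q)) * φ (dq q) := by
              rw [hinv2, one_mul]
          _ = (u * φ (aq q) ^ (l - 1)) * (1 + q • (φ (bq q) * φ (cq q))) := by
              rw [mul_assoc, h1]
      intro x hx
      rw [hdexp]
      have h2 : (1 + q • (φ (bq q) * φ (cq q))) * x ∈ M := by
        rw [add_mul, one_mul, smul_mul_assoc, mul_assoc]
        exact add_mem hx (hz q _ (hmulb _ (hmulc _ hx)))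
      rw [mul_assoc, mul_assoc]
      exact hmulu _ (hmulapow (l - 1) _ h2)
    have hone : (1 : R) ∈ M := by
      have h1 : mfun (⟨0, hl0⟩, ⟨0, hl0⟩, ⟨0, hl0⟩) = 1 := by
        rw [hmfun]; simp
      rw [← h1]
      exact Submodule.subset_span ⟨_, rfl⟩
    have hφ : ∀ x : ASLq q, ∀ m ∈ M, φ x * m ∈ M := by
      intro x
      have hx : x ∈ Algebra.adjoin ℂ ({aq q, bq q, cq q, dq q} : Set (ASLq q)) := by
        rw [adjoin_gens]; trivial
      induction hx using Algebra.adjoin_induction with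
      | mem z hz' =>
        simp only [Set.mem_insert_iff, Set.mem_singleton_iff] at hz'
        rcases hz' with rfl | rfl | rfl | rfl
        · exact hmula
        · exact hmulb
        · exact hmulc
        · exact hmuld
      | algebraMap r =>
        intro m hm
        rw [AlgHom.commutes, ← Algebra.smul_def]
        exact hz r m hm
      | add x y _ _ hx hy =>
        intro m hm
        rw [map_add, add_mul]
        exact add_mem (hx m hm) (hy m hm)
      | mul x y _ _ hx hy =>
        intro m hm
        rw [map_mul, mul_assoc]
        exact hx _ (hy m hm)
    obtain ⟨x, n, rfl⟩ := hsurj y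
    have hu_n : u ^ n ∈ S := pow_mem huS n
    have hcommx : φ x * u ^ n = u ^ n * φ x := (hSy _ hu_n (φ x)).symm
    rw [hcommx]
    refine hmem _ hu_n _ ?_
    have := hφ x 1 hone
    simpa using this
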